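/- Given a k-partite density matrix ρ on ℂ^{d_1} ⊗ ⋯ ⊗ ℂ^{d_k}, suppose there are unit vectors |ψ_1⟩ ∈ ℂ^{d_1}, …, |ψ_k⟩ ∈ ℂ^{d_k} such that ⟨ψ_i| ρ^{A_i} |ψ_i⟩ ≥ 1 − ε_i for all i, where ρ^{A_i} denotes the reduced density matrix of ρ on the i-th factor. Let |Ψ⟩ := |ψ_1⟩ ⊗ ⋯ ⊗ |ψ_k⟩ and ε := ε_1 + ⋯ + ε_k. Then ⟨Ψ| ρ |Ψ⟩ ≥ 1 − ε. -/

import Mathlib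

open Matrix
open scoped ComplexOrder

/-- The reduced density matrix of a `k`-partite state on the `i`-th factor:
entry `(a, b)` is the sum of `ρ[(j with i-th coord a), (j with i-th coord b)]`
over all choices of the other coordinates. -/
noncomputable def reducedAt {k : ℕ} {d : Fin k → ℕ}
    (ρ : Matrix ((i : Fin k) → Fin (d i)) ((i : Fin k) → Fin (d i)) ℂ) (i : Fin k) :
    Matrix (Fin (d i)) (Fin (d i)) ℂ :=
  fun a b => ∑ j : (i' : Fin k) → Fin (d i'),
    if j i = a then ρ j (Function.update j i b) else 0

variable {k : ℕ} {d : Fin k → ℕ}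

lemma update_eq_self_of_agree {i : Fin k}
    {j a : (i' : Fin k) → Fin (d i')} (ha : ∀ i', i' ≠ i → j i' = a i') :
    Function.update j i (a i) = a := by
  funext i'
  rcases eq_or_ne i' i with rfl | hne
  · simp
  · simp [Function.update_of_ne hne, ha i' hne]

lemma sum_agree (i : Fin k) (j : (i' : Fin k) → Fin (d i'))
    (F : ((i' : Fin k) → Fin (d i')) → ℂ) :
    ∑ j', (if ∀ i', i' ≠ i → j i' = j' i' then F j' else 0)
      = ∑ b, F (Function.update j i b) := by
  classical
  rw [← Finset.sum_filter]
  refine Finset.sum_nbij' (fun j' => j' i) (fun b => Function.update j i b) ?_ ?_ ?_ ?_ ?_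
  · intro a _; exact Finset.mem_univ _
  · intro b _
    simp only [Finset.mem_filter, Finset.mem_univ, true_and]
    intro i' hi'
    exact (Function.update_of_ne hi' b j).symm
  · intro a ha
    simp only [Finset.mem_filter, Finset.mem_univ, true_and] at ha
    exact update_eq_self_of_agree ha
  · intro b _; simp
  · intro a ha
    simp only [Finset.mem_filter, Finset.mem_univ, true_and] at ha
    rw [update_eq_self_of_agree ha]

/-- The projection onto `ψ i` at slot `i`, tensored with identity elsewhere. -/
noncomputable def Pm (ψ : (i : Fin k) → Fin (d i) → ℂ) (i : Fin k) :
    Matrix ((i' : Fin k) → Fin (d i')) ((i' : Fin k) → Fin (d i')) ℂ :=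
  fun j j' => if ∀ i', i' ≠ i → j i' = j' i'
    then ψ i (j i) * (starRingEnd ℂ) (ψ i (j' i)) else 0

/-- Closed form for the product of the `Pm`'s over a finset. -/
noncomputable def Qm (ψ : (i : Fin k) → Fin (d i) → ℂ) (s : Finset (Fin k)) :
    Matrix ((i' : Fin k) → Fin (d i')) ((i' : Fin k) → Fin (d i')) ℂ :=
  fun j j' => if ∀ m ∉ s, j m = j' m
    then ∏ i ∈ s, (ψ i (j i) * (starRingEnd ℂ) (ψ i (j' i))) else 0

lemma Pm_herm (ψ : (i : Fin k) → Fin (d i) → ℂ) (i : Fin k) : (Pm ψ i)ᴴ = Pm ψ i := by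
  funext j j'
  simp only [Matrix.conjTranspose_apply, Pm]
  by_cases hc : ∀ i', i' ≠ i → j i' = j' i'
  · rw [if_pos hc, if_pos (fun i' hi' => (hc i' hi').symm)]
    simp [mul_comm]
  · rw [if_neg hc, if_neg (fun h => hc fun i' hi' => (h i' hi').symm), star_zero]

lemma Qm_herm (ψ : (i : Fin k) → Fin (d i) → ℂ) (s : Finset (Fin k)) : (Qm ψ s)ᴴ = Qm ψ s := by
  funext j j'
  simp only [Matrix.conjTranspose_apply, Qm]
  by_cases hc : ∀ m ∉ s, j m = j' m
  · rw [if_pos hc, if_pos (fun m hm => (hc m hm).symm)]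
    rw [show (star : ℂ → ℂ) = (starRingEnd ℂ) from rfl, map_prod]
    exact Finset.prod_congr rfl fun i _ => by simp [mul_comm]
  · rw [if_neg hc, if_neg (fun h => hc fun m hm => (h m hm).symm), star_zero]

lemma Qm_empty (ψ : (i : Fin k) → Fin (d i) → ℂ) : Qm ψ (∅ : Finset (Fin k)) = 1 := by
  funext j j'
  simp only [Qm, Finset.notMem_empty, not_false_iff, forall_true_left, Finset.prod_empty]
  by_cases h : j = j'
  · subst h; simp
  · rw [if_neg (fun hc => h (funext hc)), Matrix.one_apply_ne h]

lemma Pm_mul_apply (ψ : (i : Fin k) → Fin (d i) → ℂ) (i : Fin k)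
    (M : Matrix ((i' : Fin k) → Fin (d i')) ((i' : Fin k) → Fin (d i')) ℂ) (j j') :
    (Pm ψ i * M) j j'
      = ψ i (j i) * ∑ b, (starRingEnd ℂ) (ψ i b) * M (Function.update j i b) j' := by
  rw [Matrix.mul_apply]
  simp only [Pm, ite_mul, zero_mul]
  rw [sum_agree i j (fun j'' => ψ i (j i) * (starRingEnd ℂ) (ψ i (j'' i)) * M j'' j')]
  rw [Finset.mul_sum]
  exact Finset.sum_congr rfl fun b _ => by rw [Function.update_self]; ring

lemma sum_agree' (i : Fin k) (j : (i' : Fin k) → Fin (d i'))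
    (F : ((i' : Fin k) → Fin (d i')) → ℂ) :
    ∑ j', (if ∀ i', i' ≠ i → j' i' = j i' then F j' else 0)
      = ∑ b, F (Function.update j i b) := by
  have hiff : ∀ j' : (i' : Fin k) → Fin (d i'),
      (∀ i', i' ≠ i → j' i' = j i') ↔ (∀ i', i' ≠ i → j i' = j' i') :=
    fun j' => ⟨fun h i' hi' => (h i' hi').symm, fun h i' hi' => (h i' hi').symm⟩
  simp only [hiff]
  exact sum_agree i j F

lemma Pm_idem (ψ : (i : Fin k) → Fin (d i) → ℂ) (i : Fin k)
    (hψi : ∑ b, (starRingEnd ℂ) (ψ i b) * ψ i b = 1) :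
    Pm ψ i * Pm ψ i = Pm ψ i := by
  funext j j'
  rw [Pm_mul_apply]
  have hcond : ∀ b : Fin (d i),
      (∀ i', i' ≠ i → Function.update j i b i' = j' i') ↔ (∀ i', i' ≠ i → j i' = j' i') := by
    intro b
    constructor <;> intro h i' hi' <;>
      simpa [Function.update_of_ne hi'] using h i' hi'
  simp only [Pm, hcond, Function.update_self]
  by_cases hC : ∀ i', i' ≠ i → j i' = j' i'
  · simp only [if_pos hC, mul_ite, mul_zero]
    rw [show (∑ b, (starRingEnd ℂ) (ψ i b) * (ψ i b * (starRingEnd ℂ) (ψ i (j' i))))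
        = (∑ b, (starRingEnd ℂ) (ψ i b) * ψ i b) * (starRingEnd ℂ) (ψ i (j' i)) from by
      rw [Finset.sum_mul]; exact Finset.sum_congr rfl fun b _ => by ring]
    rw [hψi]; ring
  · simp [if_neg hC]

lemma Pm_mul_Qm (ψ : (i : Fin k) → Fin (d i) → ℂ) {a : Fin k} {s : Finset (Fin k)}
    (ha : a ∉ s) : Pm ψ a * Qm ψ s = Qm ψ (insert a s) := by
  funext j j'
  rw [Pm_mul_apply]
  have hprod : ∀ b : Fin (d a),
      ∏ i ∈ s, (ψ i (Function.update j a b i) * (starRingEnd ℂ) (ψ i (j' i)))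
        = ∏ i ∈ s, (ψ i (j i) * (starRingEnd ℂ) (ψ i (j' i))) := by
    intro b
    refine Finset.prod_congr rfl fun i hi => ?_
    rw [Function.update_of_ne (by rintro rfl; exact ha hi)]
  have hcond : ∀ b : Fin (d a),
      (∀ m ∉ s, Function.update j a b m = j' m)
        ↔ (b = j' a ∧ ∀ m ∉ insert a s, j m = j' m) := by
    intro b
    constructor
    · intro h
      refine ⟨by simpa using h a ha, fun m hm => ?_⟩
      simp only [Finset.mem_insert, not_or] at hm
      simpa [Function.update_of_ne hm.1] using h m hm.2
    · rintro ⟨rfl, h⟩ m hm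
      rcases eq_or_ne m a with rfl | hma
      · simp
      · rw [Function.update_of_ne hma]
        exact h m (by simp [hma, hm])
  simp only [Qm, hcond, hprod, ite_and, mul_ite, mul_zero]
  rw [Finset.sum_ite_eq' Finset.univ (j' a)
    (fun b => if ∀ m ∉ insert a s, j m = j' m then
      (starRingEnd ℂ) (ψ a b) * ∏ i ∈ s, (ψ i (j i) * (starRingEnd ℂ) (ψ i (j' i))) else 0)]
  simp only [Finset.mem_univ, if_true]
  by_cases hD : ∀ m ∉ insert a s, j m = j' m
  · rw [if_pos hD, if_pos hD, Finset.prod_insert ha]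
    ring
  · rw [if_neg hD, if_neg hD, mul_zero]

lemma Qm_comm (ψ : (i : Fin k) → Fin (d i) → ℂ) {a : Fin k} {s : Finset (Fin k)}
    (ha : a ∉ s) : Qm ψ s * Pm ψ a = Pm ψ a * Qm ψ s := by
  have h1 : (Pm ψ a * Qm ψ s)ᴴ = Qm ψ s * Pm ψ a := by
    rw [Matrix.conjTranspose_mul, Pm_herm, Qm_herm]
  rw [← h1, Pm_mul_Qm ψ ha, Qm_herm]

lemma Qm_idem (ψ : (i : Fin k) → Fin (d i) → ℂ)
    (hψ1 : ∀ i, ∑ b, (starRingEnd ℂ) (ψ i b) * ψ i b = 1) :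
    ∀ s : Finset (Fin k), Qm ψ s * Qm ψ s = Qm ψ s := by
  intro s
  induction s using Finset.induction_on with
  | empty => rw [Qm_empty]; exact one_mul 1
  | @insert a s ha ih =>
    rw [← Pm_mul_Qm ψ ha, mul_assoc, ← mul_assoc (Qm ψ s), Qm_comm ψ ha,
      mul_assoc, ih, ← mul_assoc, Pm_idem ψ a (hψ1 a)]

open scoped MatrixOrder in
lemma trace_mul_psd_nonneg {n : Type*} [Fintype n] [DecidableEq n] {A B : Matrix n n ℂ}
    (hA : A.PosSemidef) (hB : B.PosSemidef) : 0 ≤ (A * B).trace := by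
  have h1 : A * B = A * (CFC.sqrt B * CFC.sqrt B) := by rw [CFC.sqrt_mul_sqrt_self B hB.nonneg]
  have h2 := hA.conjTranspose_mul_mul_same (CFC.sqrt B)
  rw [(CFC.sqrt_nonneg B).posSemidef.1.eq] at h2
  rw [h1, ← mul_assoc, trace_mul_cycle]
  rw [Matrix.trace]
  apply Finset.sum_nonneg
  intro i _
  have := h2.dotProduct_mulVec_nonneg (Pi.single i 1)
  simpa [Matrix.mulVec, dotProduct, Pi.single_apply] using this

lemma one_sub_sq {n : Type*} [Fintype n] [DecidableEq n] {A : Matrix n n ℂ}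
    (hAi : A * A = A) : (1 - A) * (1 - A) = 1 - A := by
  rw [mul_sub, sub_mul, sub_mul, hAi]
  simp only [mul_one, one_mul]
  abel

lemma psd_one_sub_mul {n : Type*} [Fintype n] [DecidableEq n] {A B : Matrix n n ℂ}
    (hA : Aᴴ = A) (hB : Bᴴ = B) (hAi : A * A = A) (hBi : B * B = B)
    (hAB : A * B = B * A) : ((1 - A) * (1 - B)).PosSemidef := by
  have hexp : ∀ X Y : Matrix n n ℂ, (1 - X) * (1 - Y) = 1 - X - Y + X * Y := by
    intro X Y; noncomm_ring
  have hcomm : (1 - A) * (1 - B) = (1 - B) * (1 - A) := by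
    rw [hexp, hexp, hAB]; abel
  have hherm : ((1 - A) * (1 - B))ᴴ = (1 - A) * (1 - B) := by
    rw [Matrix.conjTranspose_mul, Matrix.conjTranspose_sub, Matrix.conjTranspose_sub,
      Matrix.conjTranspose_one, hA, hB, ← hcomm]
  have hidem : ((1 - A) * (1 - B)) * ((1 - A) * (1 - B)) = (1 - A) * (1 - B) := by
    calc ((1 - A) * (1 - B)) * ((1 - A) * (1 - B))
        = (1 - A) * (((1 - B) * (1 - A)) * (1 - B)) := by noncomm_ring
      _ = (1 - A) * (((1 - A) * (1 - B)) * (1 - B)) := by rw [hcomm]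
      _ = ((1 - A) * (1 - A)) * ((1 - B) * (1 - B)) := by noncomm_ring
      _ = (1 - A) * (1 - B) := by rw [one_sub_sq hAi, one_sub_sq hBi]
  have h := Matrix.posSemidef_conjTranspose_mul_self ((1 - A) * (1 - B))
  rwa [hherm, hidem] at h

lemma key_induction
    (ρ : Matrix ((i : Fin k) → Fin (d i)) ((i : Fin k) → Fin (d i)) ℂ)
    (hρ : ρ.PosSemidef) (hρtr : ρ.trace = 1)
    (ψ : (i : Fin k) → Fin (d i) → ℂ)
    (hψ1 : ∀ i, ∑ b, (starRingEnd ℂ) (ψ i b) * ψ i b = 1)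
    (s : Finset (Fin k)) :
    1 - ∑ i ∈ s, (1 - ((ρ * Pm ψ i).trace).re) ≤ ((ρ * Qm ψ s).trace).re := by
  classical
  induction s using Finset.induction_on with
  | empty => simp [Qm_empty, hρtr]
  | @insert a s ha ih =>
    have hPh := Pm_herm ψ a
    have hQh := Qm_herm ψ s
    have hPi := Pm_idem ψ a (hψ1 a)
    have hQi := Qm_idem ψ hψ1 s
    have hPQ : Pm ψ a * Qm ψ s = Qm ψ s * Pm ψ a := (Qm_comm ψ ha).symm
    have hR := psd_one_sub_mul hPh hQh hPi hQi hPQ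
    have hkey : Pm ψ a * Qm ψ s
        = Qm ψ s - (1 - Pm ψ a) + (1 - Pm ψ a) * (1 - Qm ψ s) := by
      noncomm_ring
    have htr : (ρ * Qm ψ (insert a s)).trace
        = (ρ * Qm ψ s).trace - (ρ * (1 - Pm ψ a)).trace
          + (ρ * ((1 - Pm ψ a) * (1 - Qm ψ s))).trace := by
      rw [← Pm_mul_Qm ψ ha, hkey, mul_add, mul_sub, trace_add, trace_sub]
    have h1P : (ρ * (1 - Pm ψ a)).trace = 1 - (ρ * Pm ψ a).trace := by
      rw [mul_sub, mul_one, trace_sub, hρtr]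
    have h0 : 0 ≤ ((ρ * ((1 - Pm ψ a) * (1 - Qm ψ s))).trace).re := by
      have := trace_mul_psd_nonneg hρ hR
      rw [Complex.le_def] at this
      simpa using this.1
    rw [Finset.sum_insert ha]
    rw [htr, h1P]
    simp only [Complex.add_re, Complex.sub_re, Complex.one_re]
    linarith

lemma trace_mul_Pm
    (ρ : Matrix ((i : Fin k) → Fin (d i)) ((i : Fin k) → Fin (d i)) ℂ)
    (ψ : (i : Fin k) → Fin (d i) → ℂ) (i : Fin k) :
    (ρ * Pm ψ i).trace
      = ∑ a, ∑ b, (starRingEnd ℂ) (ψ i a)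
          * (∑ j : (i' : Fin k) → Fin (d i'),
              if j i = a then ρ j (Function.update j i b) else 0) * ψ i b := by
  classical
  have lhs : (ρ * Pm ψ i).trace
      = ∑ j : (i' : Fin k) → Fin (d i'), ∑ b,
          ρ j (Function.update j i b) * (ψ i b * (starRingEnd ℂ) (ψ i (j i))) := by
    rw [Matrix.trace]
    refine Finset.sum_congr rfl fun j _ => ?_
    rw [Matrix.diag_apply, Matrix.mul_apply]
    simp only [Pm, mul_ite, mul_zero]
    rw [sum_agree' i j (fun j' => ρ j j' * (ψ i (j' i) * (starRingEnd ℂ) (ψ i (j i))))]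
    exact Finset.sum_congr rfl fun b _ => by rw [Function.update_self]
  rw [lhs]
  have rhs : ∑ a, ∑ b, (starRingEnd ℂ) (ψ i a)
          * (∑ j : (i' : Fin k) → Fin (d i'),
              if j i = a then ρ j (Function.update j i b) else 0) * ψ i b
      = ∑ a, ∑ j : (i' : Fin k) → Fin (d i'), ∑ b,
          (if j i = a then (starRingEnd ℂ) (ψ i a) * ρ j (Function.update j i b) * ψ i b
            else 0) := by
    refine Finset.sum_congr rfl fun a _ => ?_
    rw [Finset.sum_comm]
    refine Finset.sum_congr rfl fun b _ => ?_
    rw [Finset.mul_sum, Finset.sum_mul]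
    refine Finset.sum_congr rfl fun j _ => ?_
    split <;> simp
  rw [rhs]
  rw [show (∑ a, ∑ j : (i' : Fin k) → Fin (d i'), ∑ b,
      (if j i = a then (starRingEnd ℂ) (ψ i a) * ρ j (Function.update j i b) * ψ i b
        else 0))
    = ∑ j : (i' : Fin k) → Fin (d i'), ∑ a, ∑ b,
      (if j i = a then (starRingEnd ℂ) (ψ i a) * ρ j (Function.update j i b) * ψ i b
        else 0) from Finset.sum_comm]
  refine Finset.sum_congr rfl fun j _ => ?_
  have collapse : ∑ a, ∑ b,
      (if j i = a then (starRingEnd ℂ) (ψ i a) * ρ j (Function.update j i b) * ψ i b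
        else 0)
      = ∑ a, (if j i = a then
          ∑ b, (starRingEnd ℂ) (ψ i a) * ρ j (Function.update j i b) * ψ i b else 0) := by
    refine Finset.sum_congr rfl fun a _ => ?_
    split <;> simp
  rw [collapse, Finset.sum_ite_eq Finset.univ (j i)
    (fun a => ∑ b, (starRingEnd ℂ) (ψ i a) * ρ j (Function.update j i b) * ψ i b)]
  simp only [Finset.mem_univ, if_true]
  exact Finset.sum_congr rfl fun b _ => by ring

lemma trace_mul_Qm_univ
    (ρ : Matrix ((i : Fin k) → Fin (d i)) ((i : Fin k) → Fin (d i)) ℂ)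
    (ψ : (i : Fin k) → Fin (d i) → ℂ) :
    (ρ * Qm ψ Finset.univ).trace
      = ∑ j : (i' : Fin k) → Fin (d i'), ∑ j' : (i' : Fin k) → Fin (d i'),
          (starRingEnd ℂ) (∏ i, ψ i (j i)) * ρ j j' * ∏ i, ψ i (j' i) := by
  rw [Matrix.trace]
  refine Finset.sum_congr rfl fun j _ => ?_
  rw [Matrix.diag_apply, Matrix.mul_apply]
  refine Finset.sum_congr rfl fun j' _ => ?_
  rw [show Qm ψ Finset.univ j' j
      = ∏ i, (ψ i (j' i) * (starRingEnd ℂ) (ψ i (j i))) from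
    if_pos (fun m hm => absurd (Finset.mem_univ m) hm)]
  rw [Finset.prod_mul_distrib, map_prod]
  ring

/-- if each reduced state has squared fidelity ≥ 1 − ε_i with a pure state
|ψ_i⟩, then ρ has squared fidelity ≥ 1 − ∑ ε_i with |ψ_1⟩ ⊗ ⋯ ⊗ |ψ_k⟩. -/
theorem fidelity_tensor_product {k : ℕ} {d : Fin k → ℕ}
    (ρ : Matrix ((i : Fin k) → Fin (d i)) ((i : Fin k) → Fin (d i)) ℂ)
    (hρ : ρ.PosSemidef) (hρtr : ρ.trace = 1)
    (ψ : (i : Fin k) → Fin (d i) → ℂ)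
    (hψ : ∀ i, ∑ a, ‖ψ i a‖ ^ 2 = 1)
    (ε : Fin k → ℝ)
    (h : ∀ i, 1 - ε i ≤
      (∑ a, ∑ b, (starRingEnd ℂ) (ψ i a) * reducedAt ρ i a b * ψ i b).re) :
    1 - ∑ i, ε i ≤
      (∑ j, ∑ j', (starRingEnd ℂ) (∏ i, ψ i (j i)) * ρ j j' * ∏ i, ψ i (j' i)).re := by
  classical
  have hψ1 : ∀ i, ∑ b, (starRingEnd ℂ) (ψ i b) * ψ i b = 1 := by
    intro i
    have hb : ∀ b, (starRingEnd ℂ) (ψ i b) * ψ i b = ((‖ψ i b‖ ^ 2 : ℝ) : ℂ) := by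
      intro b
      rw [mul_comm, Complex.mul_conj, Complex.normSq_eq_norm_sq]
    rw [Finset.sum_congr rfl fun b _ => hb b, ← Complex.ofReal_sum, hψ i,
      Complex.ofReal_one]
  have hkey := key_induction ρ hρ hρtr ψ hψ1 Finset.univ
  have hP : ∀ i, ((ρ * Pm ψ i).trace).re
      = (∑ a, ∑ b, (starRingEnd ℂ) (ψ i a) * reducedAt ρ i a b * ψ i b).re := by
    intro i
    simp only [reducedAt]
    rw [trace_mul_Pm]
  rw [← trace_mul_Qm_univ ρ ψ]
  refine le_trans ?_ hkey
  have hb : ∀ i ∈ Finset.univ, 1 - ((ρ * Pm ψ i).trace).re ≤ ε i := by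
    intro i _
    have hh := h i
    rw [← hP i] at hh
    linarith
  have hsum := Finset.sum_le_sum hb
  linarith
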